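/- Let (E, F, H) be an irreducible root-of-unity sl₂ triple on a nonzero finite-dimensional complex vector space W of dimension p, with q = exp(2πi n/m) for coprime positive integers n, m and M = m (m odd) or m/2 (m even). If p < M, then there exist a nonzero vector ψ ∈ W and an integer z such that Eψ = 0 and Hψ = jψ with highest weight j = (p−1)/2 + (m/(4n))·z. -/

import Mathlib

noncomputable def qrou (n m : ℕ) : ℂ :=
  Complex.exp (2 * Real.pi * Complex.I * n / m)

noncomputable def qpow (n m : ℕ) (x : ℂ) : ℂ :=
  Complex.exp (2 * Real.pi * Complex.I * n * x / m)

noncomputable def qnum (n m : ℕ) (x : ℂ) : ℂ :=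
  (qpow n m x - qpow n m (-x)) / (qrou n m - (qrou n m)⁻¹)

def Mrou (m : ℕ) : ℕ := if m % 2 = 1 then m else m / 2

lemma qpow_add (n m : ℕ) (x y : ℂ) : qpow n m (x + y) = qpow n m x * qpow n m y := by
  unfold qpow; rw [← Complex.exp_add]; congr 1; ring

lemma qpow_zero (n m : ℕ) : qpow n m 0 = 1 := by
  unfold qpow; simp

lemma qpow_ne_zero (n m : ℕ) (x : ℂ) : qpow n m x ≠ 0 := Complex.exp_ne_zero _

lemma qpow_mul_neg (n m : ℕ) (x : ℂ) : qpow n m x * qpow n m (-x) = 1 := by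
  rw [← qpow_add]; simp [qpow_zero]

lemma qpow_pow (n m : ℕ) (x : ℂ) (k : ℕ) : qpow n m x ^ k = qpow n m (k * x) := by
  induction k with
  | zero => simp [qpow_zero]
  | succ k ih => rw [pow_succ, ih, ← qpow_add]; congr 1; push_cast; ring

lemma qrou_eq (n m : ℕ) : qrou n m = qpow n m 1 := by
  unfold qrou qpow; congr 1; ring

lemma qrou_inv (n m : ℕ) : (qrou n m)⁻¹ = qpow n m (-1) := by
  rw [qrou_eq]
  exact inv_eq_of_mul_eq_one_right (qpow_mul_neg n m 1)

lemma qnum_eq (n m : ℕ) (x : ℂ) :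
    qnum n m x = (qpow n m x - qpow n m (-x)) / (qpow n m 1 - qpow n m (-1)) := by
  unfold qnum; rw [qrou_inv, qrou_eq]

lemma qpow_nat_eq_one (n m : ℕ) (hm : m ≠ 0) (k : ℕ) (h : qpow n m (k : ℂ) = 1) :
    m ∣ n * k := by
  unfold qpow at h
  rw [Complex.exp_eq_one_iff] at h
  obtain ⟨z, hz⟩ := h
  have hπ : (Real.pi : ℂ) ≠ 0 := by exact_mod_cast Real.pi_ne_zero
  have hI : Complex.I ≠ 0 := Complex.I_ne_zero
  have hmC : (m : ℂ) ≠ 0 := Nat.cast_ne_zero.mpr hm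
  have h2 : (2 * (Real.pi : ℂ) * Complex.I) ≠ 0 := by simp [hπ, hI]
  have key : ((n * k : ℕ) : ℂ) = ((z * m : ℤ) : ℂ) := by
    push_cast
    apply mul_left_cancel₀ h2
    field_simp at hz
    linear_combination (2 * (Real.pi : ℂ) * Complex.I) * hz
  have key2 : ((n * k : ℕ) : ℤ) = z * m := by exact_mod_cast key
  have : (m : ℤ) ∣ ((n * k : ℕ) : ℤ) := ⟨z, by linarith⟩
  exact_mod_cast this

theorem highest_weight_quantization_small_dim
    (n m : ℕ) (hn1 : 1 ≤ n) (hnm : n ≤ m - 1) (hcop : Nat.Coprime n m)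
    (W : Type*) [AddCommGroup W] [Module ℂ W] [FiniteDimensional ℂ W] [Nontrivial W]
    (E F H : Module.End ℂ W)
    (hHE : H * E - E * H = E) (hHF : H * F - F * H = -F)
    (hEM : E ^ Mrou m = 0) (hFM : F ^ Mrou m = 0)
    (hEF : ∀ (v : W) (lam : ℂ), H v = lam • v →
      (E * F - F * E) v = qnum n m (2 * lam) • v)
    (hirr : ∀ p : Submodule ℂ W, (∀ w ∈ p, E w ∈ p) → (∀ w ∈ p, F w ∈ p) →
      (∀ w ∈ p, H w ∈ p) → p = ⊥ ∨ p = ⊤)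
    (hdim : Module.finrank ℂ W < Mrou m) :
    ∃ ψ : W, ψ ≠ 0 ∧ ∃ z : ℤ, E ψ = 0 ∧
      H ψ = (((Module.finrank ℂ W : ℂ) - 1) / 2 + (m : ℂ) / (4 * (n : ℂ)) * z) • ψ := by
  classical
  have hm2 : 2 ≤ m := by omega
  have hm0 : m ≠ 0 := by omega
  have hn0 : (n : ℂ) ≠ 0 := Nat.cast_ne_zero.mpr (by omega)
  have hmC : (m : ℂ) ≠ 0 := Nat.cast_ne_zero.mpr hm0
  -- Step 1: a highest weight vector
  have hKne : LinearMap.ker E ≠ ⊥ := by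
    intro hbot
    have hinj : Function.Injective E := LinearMap.ker_eq_bot.mp hbot
    have hinjM : ∀ k : ℕ, Function.Injective (⇑(E ^ k)) := by
      intro k
      induction k with
      | zero => intro a b hab; simpa using hab
      | succ k ih =>
        intro a b hab
        rw [pow_succ] at hab
        simp only [Module.End.mul_apply] at hab
        exact hinj (ih hab)
    obtain ⟨w, hw⟩ := exists_ne (0 : W)
    apply hw
    apply hinjM (Mrou m)
    rw [hEM]
    simp
  have hKinv : ∀ x ∈ LinearMap.ker E, H x ∈ LinearMap.ker E := by
    intro x hx
    rw [LinearMap.mem_ker] at hx ⊢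
    have h1 := congrArg (fun L : Module.End ℂ W => L x) hHE
    simp only [LinearMap.sub_apply, Module.End.mul_apply] at h1
    rw [hx] at h1
    simp only [map_zero, zero_sub] at h1
    exact neg_eq_zero.mp h1
  have : Nontrivial (LinearMap.ker E) := Submodule.nontrivial_iff_ne_bot.mpr hKne
  obtain ⟨μ, hμ⟩ := Module.End.exists_eigenvalue (H.restrict hKinv)
  obtain ⟨ψ', hψ'⟩ := hμ.exists_hasEigenvector
  set ψ : W := (ψ' : W) with hψdef
  have hψ0 : ψ ≠ 0 := fun h => hψ'.right (Submodule.coe_eq_zero.mp h)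
  have hEψ : E ψ = 0 := LinearMap.mem_ker.mp ψ'.2
  have hHψ : H ψ = μ • ψ := by
    have h2 := congrArg (Subtype.val) hψ'.apply_eq_smul
    simpa [LinearMap.restrict_coe_apply] using h2
  -- Step 2: the chain of vectors F^i ψ
  set ψi : ℕ → W := fun i => (F ^ i) ψ with hψidef
  have hψi0 : ψi 0 = ψ := by simp [hψidef]
  have hψisucc : ∀ i, ψi (i + 1) = F (ψi i) := by
    intro i
    simp only [hψidef, pow_succ', Module.End.mul_apply]
  have hH : ∀ i : ℕ, H (ψi i) = (μ - i) • ψi i := by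
    intro i
    induction i with
    | zero => simpa [hψi0] using hHψ
    | succ i ih =>
      have h1 := congrArg (fun L : Module.End ℂ W => L (ψi i)) hHF
      simp only [LinearMap.sub_apply, Module.End.mul_apply, LinearMap.neg_apply] at h1
      -- h1 : H (F (ψi i)) - F (H (ψi i)) = -(F (ψi i))
      have h2 : H (F (ψi i)) = F (H (ψi i)) - F (ψi i) := by
        rw [sub_eq_iff_eq_add] at h1
        rw [h1]; abel
      rw [hψisucc, h2, ih, map_smul]
      push_cast
      module
  set c : ℕ → ℂ := fun i => ∑ k ∈ Finset.range i, qnum n m (2 * (μ - k)) with hcdef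
  have hE : ∀ i : ℕ, E (ψi (i + 1)) = c (i + 1) • ψi i := by
    intro i
    induction i with
    | zero =>
      have hcomm := hEF ψ μ hHψ
      simp only [LinearMap.sub_apply, Module.End.mul_apply] at hcomm
      rw [hEψ, map_zero, sub_zero] at hcomm
      rw [hψisucc, hψi0, hcomm, hcdef]
      simp [hψi0]
    | succ i ih =>
      have hcomm := hEF (ψi (i + 1)) (μ - (i + 1 : ℕ)) (hH (i + 1))
      simp only [LinearMap.sub_apply, Module.End.mul_apply] at hcomm
      have h3 : E (F (ψi (i + 1))) = F (E (ψi (i + 1)))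
          + qnum n m (2 * (μ - (i + 1 : ℕ))) • ψi (i + 1) := by
        rw [← hcomm]; abel
      rw [hψisucc (i + 1), h3, ih, map_smul, ← hψisucc, ← add_smul]
      congr 1
      rw [hcdef]
      simp [Finset.sum_range_succ]
  -- Step 3: minimal r with F^r ψ = 0
  have hex : ∃ i, ψi i = 0 := ⟨Mrou m, by simp [hψidef, hFM]⟩
  obtain ⟨r, hr0, hrmin⟩ : ∃ r, ψi r = 0 ∧ ∀ i < r, ψi i ≠ 0 :=
    ⟨Nat.find hex, Nat.find_spec hex, fun i hi => Nat.find_min hex hi⟩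
  have hr1 : 1 ≤ r := by
    rcases Nat.eq_zero_or_pos r with h | h
    · exfalso; apply hψ0; rwa [h, hψi0] at hr0
    · exact h
  -- Step 4: linear independence and span
  set v : Fin r → W := fun i => ψi i with hvdef
  have heig : ∀ i : Fin r, H.HasEigenvector (μ - (i : ℕ)) (v i) := by
    intro i
    constructor
    · rw [Module.End.mem_eigenspace_iff]
      exact hH i
    · exact hrmin i i.2
  have hinjμ : Function.Injective (fun i : Fin r => μ - ((i : ℕ) : ℂ)) := by
    intro i j hij
    simp only at hij
    have : ((i : ℕ) : ℂ) = ((j : ℕ) : ℂ) := by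
      have := sub_right_injective hij
      exact this
    exact Fin.ext (Nat.cast_injective this)
  have hli : LinearIndependent ℂ v :=
    H.eigenvectors_linearIndependent' (fun i : Fin r => μ - (i : ℕ)) hinjμ v heig
  set U : Submodule ℂ W := Submodule.span ℂ (Set.range v) with hUdef
  have hmemU : ∀ j, j < r → ψi j ∈ U := by
    intro j hj
    exact Submodule.subset_span ⟨⟨j, hj⟩, rfl⟩
  have hinvgen : ∀ T : Module.End ℂ W, (∀ i : Fin r, T (v i) ∈ U) → ∀ w ∈ U, T w ∈ U := by
    intro T hT w hw
    induction hw using Submodule.span_induction with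
    | mem x hx => obtain ⟨i, rfl⟩ := hx; exact hT i
    | zero => rw [map_zero]; exact U.zero_mem
    | add x y _ _ hx hy => rw [map_add]; exact U.add_mem hx hy
    | smul a x _ hx => rw [map_smul]; exact U.smul_mem a hx
  have hUH : ∀ w ∈ U, H w ∈ U := by
    apply hinvgen
    intro i
    rw [show v i = ψi i from rfl, hH i]
    exact U.smul_mem _ (hmemU i i.2)
  have hUF : ∀ w ∈ U, F w ∈ U := by
    apply hinvgen
    intro i
    rw [show v i = ψi i from rfl, ← hψisucc]
    rcases Nat.lt_or_ge ((i : ℕ) + 1) r with h | h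
    · exact hmemU _ h
    · have : (i : ℕ) + 1 = r := by omega
      rw [this, hr0]
      exact U.zero_mem
  have hUE : ∀ w ∈ U, E w ∈ U := by
    apply hinvgen
    intro i
    obtain ⟨i, hi⟩ := i
    match i with
    | 0 =>
      rw [show v ⟨0, hi⟩ = ψi 0 from rfl, hψi0, hEψ]
      exact U.zero_mem
    | j + 1 =>
      rw [show v ⟨j + 1, hi⟩ = ψi (j + 1) from rfl, hE j]
      exact U.smul_mem _ (hmemU j (by omega))
  have hUtop : U = ⊤ := by
    rcases hirr U hUE hUF hUH with h | h
    · exfalso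
      apply hψ0
      have := hmemU 0 hr1
      rw [h] at this
      simpa [hψi0] using this
    · exact h
  have hbasis : Module.Basis (Fin r) ℂ W := Module.Basis.mk hli (by rw [← hUdef, hUtop])
  have hpr : Module.finrank ℂ W = r := by
    rw [Module.finrank_eq_card_basis hbasis, Fintype.card_fin]
  -- Step 5: c r = 0
  have hcr : c r = 0 := by
    obtain ⟨r', rfl⟩ : ∃ r', r = r' + 1 := ⟨r - 1, by omega⟩
    have h1 := hE r'
    rw [hr0, map_zero] at h1
    have h2 := hrmin r' (by omega)
    rcases smul_eq_zero.mp h1.symm with h | h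
    · exact h
    · exact absurd h h2
  -- Step 6: the root-of-unity conditions
  have hrM : r < Mrou m := hpr ▸ hdim
  have htr : qpow n m 2 ^ r ≠ 1 := by
    rw [qpow_pow]
    intro h
    have h' : qpow n m ((2 * r : ℕ) : ℂ) = 1 := by
      rw [← h]; congr 1; push_cast; ring
    have hdvd := qpow_nat_eq_one n m hm0 _ h'
    have h2r : m ∣ 2 * r := (Nat.Coprime.dvd_of_dvd_mul_left hcop.symm hdvd)
    have hMr : Mrou m ∣ r := by
      unfold Mrou
      by_cases hodd : m % 2 = 1
      · rw [if_pos hodd]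
        have hcop2 : Nat.Coprime m 2 := by
          rw [Nat.coprime_two_right]
          exact Nat.odd_iff.mpr hodd
        exact Nat.Coprime.dvd_of_dvd_mul_left hcop2 h2r
      · rw [if_neg hodd]
        have hm2' : 2 * (m / 2) = m := Nat.two_mul_div_two_of_even (Nat.even_iff.mpr (by omega))
        have : 2 * (m / 2) ∣ 2 * r := by rwa [hm2']
        exact (Nat.mul_dvd_mul_iff_left (by norm_num : 0 < 2)).mp this
    have := Nat.le_of_dvd (by omega) hMr
    omega
  have ht1 : qpow n m 2 ≠ 1 := fun h => htr (by rw [h, one_pow])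
  have hd0 : qpow n m 1 - qpow n m (-1) ≠ 0 := by
    intro h
    apply ht1
    have h1 : qpow n m 1 = qpow n m (-1) := sub_eq_zero.mp h
    calc qpow n m 2 = qpow n m 1 * qpow n m 1 := by rw [← qpow_add]; norm_num
      _ = qpow n m 1 * qpow n m (-1) := by nth_rewrite 2 [h1]; rfl
      _ = 1 := qpow_mul_neg n m 1
  -- numerator sum vanishes
  have hnum : ∑ k ∈ Finset.range r,
      (qpow n m (2 * (μ - k)) - qpow n m (-(2 * (μ - k)))) = 0 := by
    have h1 : (∑ k ∈ Finset.range r,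
        (qpow n m (2 * (μ - k)) - qpow n m (-(2 * (μ - k))))) /
        (qpow n m 1 - qpow n m (-1)) = 0 := by
      rw [Finset.sum_div]
      simp only [← qnum_eq]
      exact hcr
    exact (div_eq_zero_iff.mp h1).resolve_right hd0
  have hA : ∀ k : ℕ, qpow n m (2 * (μ - k)) = qpow n m (2 * μ) * qpow n m (-2) ^ k := by
    intro k; rw [qpow_pow, ← qpow_add]; congr 1; push_cast; ring
  have hB : ∀ k : ℕ, qpow n m (-(2 * (μ - k))) = qpow n m (-(2 * μ)) * qpow n m 2 ^ k := by
    intro k; rw [qpow_pow, ← qpow_add]; congr 1; push_cast; ring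
  have key : qpow n m (2 * μ) * ∑ k ∈ Finset.range r, qpow n m (-2) ^ k
      = qpow n m (-(2 * μ)) * ∑ k ∈ Finset.range r, qpow n m 2 ^ k := by
    rw [Finset.mul_sum, Finset.mul_sum]
    rw [Finset.sum_sub_distrib] at hnum
    have h2 := sub_eq_zero.mp hnum
    calc (∑ k ∈ Finset.range r, qpow n m (2 * μ) * qpow n m (-2) ^ k)
        = ∑ k ∈ Finset.range r, qpow n m (2 * (μ - k)) := by
          apply Finset.sum_congr rfl; intro k _; rw [hA]
      _ = ∑ k ∈ Finset.range r, qpow n m (-(2 * (μ - k))) := h2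
      _ = ∑ k ∈ Finset.range r, qpow n m (-(2 * μ)) * qpow n m 2 ^ k := by
          apply Finset.sum_congr rfl; intro k _; rw [hB]
  have hst : qpow n m (-2) * qpow n m 2 = 1 := by
    rw [← qpow_add]; norm_num [qpow_zero]
  have hreflect : (∑ k ∈ Finset.range r, qpow n m (-2) ^ k) * qpow n m 2 ^ (r - 1)
      = ∑ k ∈ Finset.range r, qpow n m 2 ^ k := by
    rw [Finset.sum_mul, ← Finset.sum_range_reflect (fun k => qpow n m 2 ^ k) r]
    apply Finset.sum_congr rfl
    intro k hk
    rw [Finset.mem_range] at hk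
    have hsplit : qpow n m 2 ^ (r - 1) = qpow n m 2 ^ k * qpow n m 2 ^ (r - 1 - k) := by
      rw [← pow_add]; congr 1; omega
    rw [hsplit, ← mul_assoc, ← mul_pow, hst, one_pow, one_mul]
  have hG : (∑ k ∈ Finset.range r, qpow n m 2 ^ k) ≠ 0 := by
    rw [geom_sum_eq ht1]
    exact div_ne_zero (sub_ne_zero.mpr htr) (sub_ne_zero.mpr ht1)
  have h4 : qpow n m (2 * μ) = qpow n m (-(2 * μ)) * qpow n m 2 ^ (r - 1) := by
    apply mul_right_cancel₀ hG
    calc qpow n m (2 * μ) * ∑ k ∈ Finset.range r, qpow n m 2 ^ k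
        = qpow n m (2 * μ) * ((∑ k ∈ Finset.range r, qpow n m (-2) ^ k)
            * qpow n m 2 ^ (r - 1)) := by rw [hreflect]
      _ = (qpow n m (2 * μ) * ∑ k ∈ Finset.range r, qpow n m (-2) ^ k)
            * qpow n m 2 ^ (r - 1) := by ring
      _ = (qpow n m (-(2 * μ)) * ∑ k ∈ Finset.range r, qpow n m 2 ^ k)
            * qpow n m 2 ^ (r - 1) := by rw [key]
      _ = qpow n m (-(2 * μ)) * qpow n m 2 ^ (r - 1)
            * ∑ k ∈ Finset.range r, qpow n m 2 ^ k := by ring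
  have h5 : qpow n m 2 ^ (r - 1) = qpow n m (2 * ((r : ℂ) - 1)) := by
    rw [qpow_pow]
    congr 1
    push_cast [Nat.cast_sub hr1]
    ring
  have hone : qpow n m (4 * μ - 2 * ((r : ℂ) - 1)) = 1 := by
    have hY : qpow n m (-(2 * μ)) * qpow n m (2 * ((r : ℂ) - 1)) ≠ 0 :=
      mul_ne_zero (qpow_ne_zero _ _ _) (qpow_ne_zero _ _ _)
    apply mul_right_cancel₀ hY
    rw [one_mul, ← mul_assoc, ← qpow_add, ← qpow_add]
    rw [show 4 * μ - 2 * ((r : ℂ) - 1) + -(2 * μ) + 2 * ((r : ℂ) - 1) = 2 * μ by ring]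
    rw [h4, h5]
  -- Step 7: extract the integer
  unfold qpow at hone
  rw [Complex.exp_eq_one_iff] at hone
  obtain ⟨z, hz⟩ := hone
  refine ⟨ψ, hψ0, z, hEψ, ?_⟩
  rw [hpr, hHψ]
  have hπ : (Real.pi : ℂ) ≠ 0 := by exact_mod_cast Real.pi_ne_zero
  have hI : Complex.I ≠ 0 := Complex.I_ne_zero
  have h2πI : (2 * (Real.pi : ℂ) * Complex.I) ≠ 0 := by simp [hπ, hI]
  have hlin : (n : ℂ) * (4 * μ - 2 * ((r : ℂ) - 1)) = z * m := by
    apply mul_left_cancel₀ h2πI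
    field_simp at hz
    linear_combination (2 * (Real.pi : ℂ) * Complex.I) * hz
  have hμeq : μ = ((r : ℂ) - 1) / 2 + (m : ℂ) / (4 * (n : ℂ)) * z := by
    field_simp
    linear_combination 2 * hlin
  rw [hμeq]
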